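/- For every trace-free symmetric real 3×3 matrix X, one has |det X| ≤ 54^(−1/2) · (tr(X²))^(3/2), with equality if and only if X has a repeated eigenvalue. -/

import Mathlib

open Matrix Polynomial

lemma charpoly_conj' {n : Type*} [Fintype n] [DecidableEq n]
    (U V A : Matrix n n ℝ) (hUV : U * V = 1) :
    (U * A * V).charpoly = A.charpoly := by
  have hscal : ∀ M : Matrix n n ℝ[X], Matrix.scalar n (X : ℝ[X]) * M
      = M * Matrix.scalar n (X : ℝ[X]) :=
    fun M => (Matrix.scalar_commute (X : ℝ[X]) (fun r => mul_comm _ _) M)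
  have key : charmatrix (U * A * V) =
      (C : ℝ →+* ℝ[X]).mapMatrix U * charmatrix A * (C : ℝ →+* ℝ[X]).mapMatrix V := by
    rw [charmatrix, charmatrix, mul_sub, sub_mul, RingHom.map_mul, RingHom.map_mul]
    congr 1
    rw [← hscal, mul_assoc, ← RingHom.map_mul, hUV, RingHom.map_one, mul_one]
  have hdet1 : ((C : ℝ →+* ℝ[X]).mapMatrix U).det * ((C : ℝ →+* ℝ[X]).mapMatrix V).det = 1 := by
    rw [← det_mul, ← RingHom.map_mul, hUV, RingHom.map_one, det_one]
  unfold Matrix.charpoly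
  rw [key, det_mul, det_mul, mul_right_comm, hdet1, one_mul]

lemma count_two {a b c t : ℝ} (h : 2 ≤ Multiset.count t ({a, b, c} : Multiset ℝ)) :
    a = b ∨ b = c ∨ a = c := by
  by_contra hcon
  push_neg at hcon
  obtain ⟨h1, h2, h3⟩ := hcon
  have hnd : ({a, b, c} : Multiset ℝ).Nodup := by
    simp [Multiset.nodup_cons, Multiset.mem_cons, Multiset.mem_singleton, h1, h2, h3]
  have := Multiset.nodup_iff_count_le_one.mp hnd t
  omega

theorem stmt6 (X : Matrix (Fin 3) (Fin 3) ℝ) (hX : Xᵀ = X) (htr : X.trace = 0) :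
    |X.det| ≤ (Real.sqrt 54)⁻¹ * ((X * X).trace) ^ ((3 : ℝ) / 2) ∧
    (|X.det| = (Real.sqrt 54)⁻¹ * ((X * X).trace) ^ ((3 : ℝ) / 2) ↔
      ∃ t : ℝ, (Polynomial.X - C t) ^ 2 ∣ X.charpoly) := by
  have hH : X.IsHermitian := by
    rwa [Matrix.IsHermitian, conjTranspose_eq_transpose_of_trivial]
  set U : Matrix (Fin 3) (Fin 3) ℝ := (hH.eigenvectorUnitary : Matrix (Fin 3) (Fin 3) ℝ) with hUdef
  have hUV : U * star U = 1 := Matrix.mem_unitaryGroup_iff.mp (hH.eigenvectorUnitary).2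
  have hVU : star U * U = 1 := Matrix.mem_unitaryGroup_iff'.mp (hH.eigenvectorUnitary).2
  set a : ℝ := hH.eigenvalues 0 with hadef
  set b : ℝ := hH.eigenvalues 1 with hbdef
  set c : ℝ := hH.eigenvalues 2 with hcdef
  have hofReal : (RCLike.ofReal ∘ hH.eigenvalues : Fin 3 → ℝ) = hH.eigenvalues := by
    funext i; simp
  have hspec : X = U * Matrix.diagonal hH.eigenvalues * star U := by
    conv_lhs => rw [hH.spectral_theorem]
    rw [hofReal]
    rfl
  -- trace
  have htrace : a + b + c = 0 := by
    have : X.trace = (Matrix.diagonal hH.eigenvalues).trace := by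
      conv_lhs => rw [hspec]
      rw [trace_mul_cycle, hVU, one_mul]
    rw [htr] at this
    have := this.symm
    rwa [trace_diagonal, Fin.sum_univ_three] at this
  -- trace of square
  have hs : (X * X).trace = a ^ 2 + b ^ 2 + c ^ 2 := by
    have hcancel : ∀ M : Matrix (Fin 3) (Fin 3) ℝ, star U * (U * M) = M := fun M => by
      rw [← Matrix.mul_assoc, hVU, Matrix.one_mul]
    have hXX : X * X = U * (Matrix.diagonal hH.eigenvalues * Matrix.diagonal hH.eigenvalues)
        * star U := by
      have h1 : X * X = (U * Matrix.diagonal hH.eigenvalues * star U)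
          * (U * Matrix.diagonal hH.eigenvalues * star U) := by rw [← hspec]
      rw [h1]
      simp only [Matrix.mul_assoc, hcancel]
    rw [hXX, trace_mul_cycle, hVU, one_mul, diagonal_mul_diagonal,
      trace_diagonal, Fin.sum_univ_three]
    ring
  -- determinant
  have hdet : X.det = a * b * c := by
    rw [hH.det_eq_prod_eigenvalues, Fin.prod_univ_three]
    norm_num
    rfl
  -- charpoly
  have hcp : X.charpoly = (Polynomial.X - C a) * (Polynomial.X - C b) * (Polynomial.X - C c) := by
    have h1 : X.charpoly = (Matrix.diagonal hH.eigenvalues).charpoly := by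
      conv_lhs => rw [hspec]
      exact charpoly_conj' _ _ _ hUV
    rw [h1, charpoly_of_upperTriangular _ (blockTriangular_diagonal _), Fin.prod_univ_three]
    simp
    rfl
  clear_value a b c
  clear hofReal hspec hUV hVU hUdef
  clear_value U
  set s : ℝ := (X * X).trace with hsdef
  clear_value s
  have hs0 : (0:ℝ) ≤ s := by rw [hs]; positivity
  have hkey : s ^ 3 - 54 * (a * b * c) ^ 2 = 2 * ((a - b) * (b - c) * (c - a)) ^ 2 := by
    have hc : c = -(a + b) := by linarith
    rw [hs, hc]; ring
  -- rewrite RHS as sqrt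
  have hrhs : (Real.sqrt 54)⁻¹ * s ^ ((3:ℝ)/2) = Real.sqrt (s ^ 3 / 54) := by
    rw [show ((3:ℝ)/2) = ((3:ℕ) : ℝ) * (1/2 : ℝ) by norm_num, Real.rpow_natCast_mul hs0,
      ← Real.sqrt_eq_rpow, ← Real.sqrt_inv,
      ← Real.sqrt_mul (by positivity : (0:ℝ) ≤ (54:ℝ)⁻¹)]
    congr 1
    ring
  have hdet2 : |X.det| = Real.sqrt ((a*b*c)^2) := by
    rw [hdet, Real.sqrt_sq_eq_abs]
  have hineq : |X.det| ≤ (Real.sqrt 54)⁻¹ * s ^ ((3:ℝ)/2) := by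
    rw [hrhs, hdet2]
    apply Real.sqrt_le_sqrt
    nlinarith [sq_nonneg ((a - b) * (b - c) * (c - a))]
  refine ⟨hineq, ?_⟩
  have heqiff : |X.det| = (Real.sqrt 54)⁻¹ * s ^ ((3:ℝ)/2) ↔ a = b ∨ b = c ∨ a = c := by
    rw [hrhs, hdet2]
    rw [Real.sqrt_inj (by positivity) (by positivity)]
    constructor
    · intro h
      have h2 : ((a - b) * (b - c) * (c - a)) ^ 2 = 0 := by nlinarith
      have h3 := pow_eq_zero_iff (n := 2) (by norm_num) |>.mp h2
      rcases mul_eq_zero.mp h3 with h4 | h4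
      · rcases mul_eq_zero.mp h4 with h5 | h5
        · left; linarith [sub_eq_zero.mp h5]
        · right; left; linarith [sub_eq_zero.mp h5]
      · right; right; linarith [sub_eq_zero.mp h4]
    · intro h
      have h4 : (a - b) * (b - c) * (c - a) = 0 := by
        rcases h with h | h | h <;> rw [h] <;> ring
      nlinarith
  rw [heqiff]
  constructor
  · rintro (h | h | h)
    · exact ⟨a, by rw [hcp, h]; exact ⟨Polynomial.X - C c, by ring⟩⟩
    · exact ⟨b, by rw [hcp, h]; exact ⟨Polynomial.X - C a, by ring⟩⟩
    · exact ⟨a, by rw [hcp, ← h]; exact ⟨Polynomial.X - C b, by ring⟩⟩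
  · rintro ⟨t, ht⟩
    rw [hcp] at ht
    have hp0 : ((Polynomial.X - C a) * (Polynomial.X - C b) * (Polynomial.X - C c) : ℝ[X]) ≠ 0 := by
      apply mul_ne_zero (mul_ne_zero (X_sub_C_ne_zero a) (X_sub_C_ne_zero b)) (X_sub_C_ne_zero c)
    have hmult : 2 ≤ Polynomial.rootMultiplicity t
        ((Polynomial.X - C a) * (Polynomial.X - C b) * (Polynomial.X - C c)) :=
      (Polynomial.le_rootMultiplicity_iff hp0).mpr ht
    have hroots : ((Polynomial.X - C a) * (Polynomial.X - C b) * (Polynomial.X - C c) : ℝ[X]).roots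
        = {a, b, c} := by
      rw [Polynomial.roots_mul hp0,
        Polynomial.roots_mul (mul_ne_zero (X_sub_C_ne_zero a) (X_sub_C_ne_zero b)),
        Polynomial.roots_X_sub_C, Polynomial.roots_X_sub_C, Polynomial.roots_X_sub_C]
      rfl
    have hcount : 2 ≤ Multiset.count t ({a, b, c} : Multiset ℝ) := by
      rw [← hroots, Polynomial.count_roots]
      exact hmult
    exact count_two hcount
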